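/- Let u ≥ 2 be a power of 2, let b ≥ 1 be an integer, and let X be a finite set of integers contained in (0, u]. Then there exists a collection 𝒮 of subsets of X, each of cardinality at most b, with |𝒮| ≤ 2·(b+1)²·u·(log₂ u + 1), such that for every subset S ⊆ X there exists a subset Ŝ ⊆ X with |Ŝ| = |S|, SUM(Ŝ) = SUM(S), and Ŝ is the union of at most 2·(|S|/b + 1)·(log₂ u + 1) pairwise disjoint members of 𝒮. -/

import Mathlib

/-- `SUM S` is the sum of the elements of the finite set `S`. -/
def SUM (S : Finset ℕ) : ℕ := S.sum id

open Classical in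
/-- canonical witness: some subset of `X ∩ (lo, lo+len]` with given cardinality and sum. -/
noncomputable def canW (X : Finset ℕ) (lo len m σ : ℕ) : Finset ℕ :=
  if h : ∃ T : Finset ℕ,
      T ⊆ X.filter (fun x => lo < x ∧ x ≤ lo + len) ∧ T.card = m ∧ SUM T = σ
  then h.choose else ∅

lemma canW_spec {X : Finset ℕ} {lo len m σ : ℕ}
    (h : ∃ T : Finset ℕ,
      T ⊆ X.filter (fun x => lo < x ∧ x ≤ lo + len) ∧ T.card = m ∧ SUM T = σ) :
    canW X lo len m σ ⊆ X.filter (fun x => lo < x ∧ x ≤ lo + len) ∧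
      (canW X lo len m σ).card = m ∧ SUM (canW X lo len m σ) = σ := by
  rw [canW, dif_pos h]
  exact h.choose_spec

lemma canW_neg {X : Finset ℕ} {lo len m σ : ℕ}
    (h : ¬ ∃ T : Finset ℕ,
      T ⊆ X.filter (fun x => lo < x ∧ x ≤ lo + len) ∧ T.card = m ∧ SUM T = σ) :
    canW X lo len m σ = ∅ := by
  rw [canW, dif_neg h]

/-- the family of all canonical witnesses over the dyadic tree on `(0, 2^L]`. -/
noncomputable def FAM (X : Finset ℕ) (b L : ℕ) : Finset (Finset ℕ) :=
  (Finset.range (L+1)).biUnion fun t =>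
    (Finset.range (2^(L-t))).biUnion fun j =>
      (Finset.Icc 1 b).biUnion fun m =>
        (Finset.Ioc (m*(j*2^t)) (m*(j*2^t) + m*2^t)).image fun σ =>
          canW X (j*2^t) (2^t) m σ

lemma FAM_mem {X : Finset ℕ} {b L : ℕ} {A : Finset ℕ} (hA : A ∈ FAM X b L) :
    A ⊆ X ∧ A.card ≤ b := by
  unfold FAM at hA
  simp only [Finset.mem_biUnion, Finset.mem_image, Finset.mem_Icc, Finset.mem_range,
    Finset.mem_Ioc] at hA
  obtain ⟨t, ht, j, hj, m, ⟨hm1, hmb⟩, σ, hσ, rfl⟩ := hA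
  by_cases h : ∃ T : Finset ℕ,
      T ⊆ X.filter (fun x => j*2^t < x ∧ x ≤ j*2^t + 2^t) ∧ T.card = m ∧ SUM T = σ
  · obtain ⟨hsub, hcard, _⟩ := canW_spec h
    refine ⟨fun x hx => (Finset.mem_filter.mp (hsub hx)).1, by rw [hcard]; exact hmb⟩
  · rw [canW_neg h]
    exact ⟨Finset.empty_subset _, by simp⟩

lemma mem_FAM_of {X : Finset ℕ} {b L t' lo' m σ j : ℕ} (ht : t' ≤ L)
    (hlo : lo' = j * 2^t') (hle : lo' + 2^t' ≤ 2^L) (hm1 : 1 ≤ m) (hmb : m ≤ b)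
    (hσ1 : m*lo' < σ) (hσ2 : σ ≤ m*lo' + m*2^t') :
    canW X lo' (2^t') m σ ∈ FAM X b L := by
  subst hlo
  have hpow : 2^(L-t') * 2^t' = 2^L := by rw [← pow_add, Nat.sub_add_cancel ht]
  have h2t : 0 < 2^t' := Nat.pow_pos (by norm_num)
  have hj : j < 2^(L-t') := by
    by_contra hc
    push_neg at hc
    have h3 : 2^(L-t') * 2^t' ≤ j * 2^t' := Nat.mul_le_mul_right _ hc
    omega
  unfold FAM
  rw [Finset.mem_biUnion]
  exact ⟨t', Finset.mem_range.mpr (by omega), Finset.mem_biUnion.mpr ⟨j,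
    Finset.mem_range.mpr hj, Finset.mem_biUnion.mpr ⟨m, Finset.mem_Icc.mpr ⟨hm1, hmb⟩,
      Finset.mem_image.mpr ⟨σ, Finset.mem_Ioc.mpr ⟨hσ1, hσ2⟩, rfl⟩⟩⟩⟩

lemma FAM_card (X : Finset ℕ) (b L : ℕ) : (FAM X b L).card ≤ (L+1) * (b*b*2^L) := by
  unfold FAM
  refine le_trans Finset.card_biUnion_le ?_
  refine le_trans (Finset.sum_le_card_nsmul _ _ (b*b*2^L) ?_) ?_
  · intro t ht
    rw [Finset.mem_range] at ht
    refine le_trans Finset.card_biUnion_le ?_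
    refine le_trans (Finset.sum_le_card_nsmul _ _ (b*(b*2^t)) ?_) ?_
    · intro j _
      refine le_trans Finset.card_biUnion_le ?_
      refine le_trans (Finset.sum_le_card_nsmul _ _ (b*2^t) ?_) ?_
      · intro m hm
        rw [Finset.mem_Icc] at hm
        refine le_trans Finset.card_image_le ?_
        rw [Nat.card_Ioc]
        have h1 : m * (j*2^t) + m*2^t - m*(j*2^t) = m*2^t := by omega
        rw [h1]
        exact Nat.mul_le_mul_right _ hm.2
      · rw [Nat.card_Icc, smul_eq_mul]
        have : b + 1 - 1 = b := by omega
        rw [this]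
    · rw [Finset.card_range, smul_eq_mul]
      have e : 2^(L-t) * (b*(b*2^t)) = b*b*2^L := by
        calc 2^(L-t) * (b*(b*2^t)) = b*b*(2^(L-t)*2^t) := by ring
          _ = b*b*2^L := by rw [← pow_add, Nat.sub_add_cancel (by omega : t ≤ L)]
      exact le_of_eq e
  · rw [Finset.card_range, smul_eq_mul]

/-- the conclusion of the recursive decomposition lemma. -/
def Concl (X : Finset ℕ) (b t lo : ℕ) (S : Finset ℕ) : Prop :=
  ∃ 𝒯 : Finset (Finset ℕ),
    (∀ A ∈ 𝒯, ∃ t' lo' m σ : ℕ, t' ≤ t ∧ (∃ j, lo' = j * 2^t') ∧ lo ≤ lo' ∧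
        lo' + 2^t' ≤ lo + 2^t ∧ 1 ≤ m ∧ m ≤ b ∧
        m*lo' < σ ∧ σ ≤ m*lo' + m*2^t' ∧ A = canW X lo' (2^t') m σ) ∧
    (∀ A ∈ 𝒯, A ⊆ X ∧ (∀ x ∈ A, lo < x ∧ x ≤ lo + 2^t) ∧ A.Nonempty) ∧
    (↑𝒯 : Set (Finset ℕ)).PairwiseDisjoint id ∧
    (𝒯.biUnion id).card = S.card ∧ SUM (𝒯.biUnion id) = SUM S ∧
    𝒯.card * (b+1) ≤ (b+1) + t * S.card

lemma concl_empty (X : Finset ℕ) (b t lo : ℕ) : Concl X b t lo ∅ := by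
  refine ⟨∅, by simp, by simp, by simp, by simp, by simp, by simp⟩

lemma concl_leaf (X : Finset ℕ) (b t lo : ℕ) (S : Finset ℕ) (hSX : S ⊆ X)
    (hmem : ∀ x ∈ S, lo < x ∧ x ≤ lo + 2^t) (hdvd : ∃ j, lo = j * 2^t)
    (h1 : 1 ≤ S.card) (hcb : S.card ≤ b) : Concl X b t lo S := by
  have hex : ∃ T : Finset ℕ,
      T ⊆ X.filter (fun x => lo < x ∧ x ≤ lo + 2^t) ∧ T.card = S.card ∧ SUM T = SUM S :=
    ⟨S, fun x hx => Finset.mem_filter.mpr ⟨hSX hx, hmem x hx⟩, rfl, rfl⟩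
  obtain ⟨hsub, hcard, hsum⟩ := canW_spec hex
  set A := canW X lo (2^t) S.card (SUM S) with hA
  have hσl : S.card * lo < SUM S := by
    have h := Finset.card_nsmul_le_sum S id (lo+1) (fun x hx => (hmem x hx).1)
    rw [smul_eq_mul] at h
    have e : S.card*(lo+1) = S.card*lo + S.card := by ring
    rw [e] at h
    have : SUM S = S.sum id := rfl
    omega
  have hσr : SUM S ≤ S.card*lo + S.card*2^t := by
    have h := Finset.sum_le_card_nsmul S id (lo+2^t) (fun x hx => (hmem x hx).2)
    rw [smul_eq_mul] at h
    have e : S.card*(lo+2^t) = S.card*lo + S.card*2^t := by ring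
    rw [e] at h
    have : SUM S = S.sum id := rfl
    omega
  refine ⟨{A}, ?_, ?_, ?_, ?_, ?_, ?_⟩
  · intro B hB
    rw [Finset.mem_singleton] at hB
    subst hB
    exact ⟨t, lo, S.card, SUM S, le_refl t, hdvd, le_refl lo, le_refl _, h1, hcb, hσl, hσr, rfl⟩
  · intro B hB
    rw [Finset.mem_singleton] at hB
    subst hB
    refine ⟨fun x hx => (Finset.mem_filter.mp (hsub hx)).1,
      fun x hx => (Finset.mem_filter.mp (hsub hx)).2, ?_⟩
    rw [← Finset.card_pos, hcard]; omega
  · rw [Finset.coe_singleton]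
    exact Set.pairwiseDisjoint_singleton _ _
  · rw [Finset.singleton_biUnion]; exact hcard
  · rw [Finset.singleton_biUnion]; exact hsum
  · rw [Finset.card_singleton]; omega

lemma main (X : Finset ℕ) (b : ℕ) (hb : 1 ≤ b) :
    ∀ (t lo : ℕ) (S : Finset ℕ), S ⊆ X → (∀ x ∈ S, lo < x ∧ x ≤ lo + 2^t) →
      (∃ j, lo = j * 2^t) → Concl X b t lo S := by
  intro t
  induction t with
  | zero =>
    intro lo S hSX hmem hdvd
    rcases S.eq_empty_or_nonempty with rfl | hne
    · exact concl_empty X b 0 lo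
    · have hS1 : S.card ≤ 1 := by
        have hsub : S ⊆ {lo+1} := by
          intro x hx
          have := hmem x hx
          simp only [pow_zero] at this
          simp only [Finset.mem_singleton]
          omega
        simpa using Finset.card_le_card hsub
      exact concl_leaf X b 0 lo S hSX hmem hdvd (Finset.card_pos.mpr hne) (le_trans hS1 hb)
  | succ s ih =>
    intro lo S hSX hmem hdvd
    by_cases hsmall : S.card ≤ b
    · rcases S.eq_empty_or_nonempty with rfl | hne
      · exact concl_empty X b (s+1) lo
      · exact concl_leaf X b (s+1) lo S hSX hmem hdvd (Finset.card_pos.mpr hne) hsmall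
    · have h2 : (2:ℕ)^(s+1) = 2^s + 2^s := by rw [pow_succ]; omega
      obtain ⟨j, hj⟩ := hdvd
      have hdl : ∃ j', lo = j' * 2^s := ⟨2*j, by rw [hj, pow_succ]; ring⟩
      have hdr : ∃ j', lo + 2^s = j' * 2^s := ⟨2*j+1, by rw [hj, pow_succ]; ring⟩
      have hml : ∀ x ∈ S.filter (fun x => x ≤ lo + 2^s), lo < x ∧ x ≤ lo + 2^s := by
        intro x hx
        rcases Finset.mem_filter.mp hx with ⟨hxS, hxle⟩
        exact ⟨(hmem x hxS).1, hxle⟩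
      have hmr : ∀ x ∈ S.filter (fun x => ¬ x ≤ lo + 2^s),
          lo + 2^s < x ∧ x ≤ (lo + 2^s) + 2^s := by
        intro x hx
        rcases Finset.mem_filter.mp hx with ⟨hxS, hxgt⟩
        have hx2 := (hmem x hxS).2
        exact ⟨not_le.mp hxgt, le_trans hx2 (le_of_eq (by rw [h2]; ring))⟩
      obtain ⟨Tl, hTl_dat, hTl_props, hTl_pd, hTl_card, hTl_sum, hTl_cnt⟩ :=
        ih lo (S.filter (fun x => x ≤ lo + 2^s))
          (fun x hx => hSX (Finset.filter_subset _ _ hx)) hml hdl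
      obtain ⟨Tr, hTr_dat, hTr_props, hTr_pd, hTr_card, hTr_sum, hTr_cnt⟩ :=
        ih (lo + 2^s) (S.filter (fun x => ¬ x ≤ lo + 2^s))
          (fun x hx => hSX (Finset.filter_subset _ _ hx)) hmr hdr
      have hdisj : ∀ A ∈ Tl, ∀ B ∈ Tr, Disjoint A B := by
        intro A hA B hB
        rw [Finset.disjoint_left]
        intro x hxA hxB
        have e1 := (hTl_props A hA).2.1 x hxA
        have e2 := (hTr_props B hB).2.1 x hxB
        exact (not_le.mpr e2.1) e1.2
      have hDU : Disjoint (Tl.biUnion id) (Tr.biUnion id) := by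
        rw [Finset.disjoint_left]
        intro x hx hx'
        obtain ⟨A, hA, hxA⟩ := Finset.mem_biUnion.mp hx
        obtain ⟨B, hB, hxB⟩ := Finset.mem_biUnion.mp hx'
        have e1 := (hTl_props A hA).2.1 x hxA
        have e2 := (hTr_props B hB).2.1 x hxB
        exact (not_le.mpr e2.1) e1.2
      have hbu : (Tl ∪ Tr).biUnion id = Tl.biUnion id ∪ Tr.biUnion id := by
        ext x
        simp only [Finset.mem_biUnion, Finset.mem_union]
        constructor
        · rintro ⟨A, hA | hA, hxA⟩
          · exact Or.inl ⟨A, hA, hxA⟩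
          · exact Or.inr ⟨A, hA, hxA⟩
        · rintro (⟨A, hA, hxA⟩ | ⟨A, hA, hxA⟩)
          · exact ⟨A, Or.inl hA, hxA⟩
          · exact ⟨A, Or.inr hA, hxA⟩
      have hcards : (S.filter (fun x => x ≤ lo + 2^s)).card
          + (S.filter (fun x => ¬ x ≤ lo + 2^s)).card = S.card :=
        Finset.card_filter_add_card_filter_not _
      have hsums : SUM (S.filter (fun x => x ≤ lo + 2^s))
          + SUM (S.filter (fun x => ¬ x ≤ lo + 2^s)) = SUM S :=
        Finset.sum_filter_add_sum_filter_not S (fun x => x ≤ lo + 2^s) id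
      refine ⟨Tl ∪ Tr, ?_, ?_, ?_, ?_, ?_, ?_⟩
      · intro A hA
        rcases Finset.mem_union.mp hA with h | h
        · obtain ⟨t', lo', m, σ, ht', hdvd', hlo1, hlo2, hm1, hmb, hσ1, hσ2, hAeq⟩ := hTl_dat A h
          exact ⟨t', lo', m, σ, le_trans ht' (Nat.le_succ s), hdvd', hlo1,
            le_trans hlo2 (by rw [h2]; exact Nat.add_le_add_left (Nat.le_add_right _ _) lo),
            hm1, hmb, hσ1, hσ2, hAeq⟩
        · obtain ⟨t', lo', m, σ, ht', hdvd', hlo1, hlo2, hm1, hmb, hσ1, hσ2, hAeq⟩ := hTr_dat A h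
          exact ⟨t', lo', m, σ, le_trans ht' (Nat.le_succ s), hdvd',
            le_trans (Nat.le_add_right lo (2^s)) hlo1,
            le_trans hlo2 (le_of_eq (by rw [h2]; ring)),
            hm1, hmb, hσ1, hσ2, hAeq⟩
      · intro A hA
        rcases Finset.mem_union.mp hA with h | h
        · obtain ⟨hAX, hAr, hAne⟩ := hTl_props A h
          refine ⟨hAX, fun x hx => ?_, hAne⟩
          have hthis := hAr x hx
          exact ⟨hthis.1, le_trans hthis.2
            (by rw [h2]; exact Nat.add_le_add_left (Nat.le_add_right _ _) lo)⟩
        · obtain ⟨hAX, hAr, hAne⟩ := hTr_props A h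
          refine ⟨hAX, fun x hx => ?_, hAne⟩
          have hthis := hAr x hx
          exact ⟨lt_of_le_of_lt (Nat.le_add_right lo _) hthis.1,
            le_trans hthis.2 (le_of_eq (by rw [h2]; ring))⟩
      · intro A hA B hB hne
        simp only [Finset.coe_union, Set.mem_union] at hA hB
        rcases hA with hA | hA <;> rcases hB with hB | hB
        · exact hTl_pd hA hB hne
        · simp only [Function.onFun, id_eq]
          exact hdisj _ hA _ hB
        · simp only [Function.onFun, id_eq]
          exact (hdisj _ hB _ hA).symm
        · exact hTr_pd hA hB hne
      · rw [hbu, Finset.card_union_of_disjoint hDU, hTl_card, hTr_card, hcards]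
      · show SUM _ = SUM S
        rw [hbu]
        show ((Tl.biUnion id) ∪ (Tr.biUnion id)).sum id = SUM S
        rw [Finset.sum_union hDU]
        show SUM (Tl.biUnion id) + SUM (Tr.biUnion id) = SUM S
        rw [hTl_sum, hTr_sum, hsums]
      · have hcu : (Tl ∪ Tr).card ≤ Tl.card + Tr.card := Finset.card_union_le _ _
        have hbig : b + 1 ≤ S.card := by omega
        calc (Tl ∪ Tr).card * (b+1) ≤ (Tl.card + Tr.card) * (b+1) :=
              Nat.mul_le_mul_right _ hcu
          _ = Tl.card*(b+1) + Tr.card*(b+1) := by ring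
          _ ≤ ((b+1) + s*(S.filter (fun x => x ≤ lo + 2^s)).card)
              + ((b+1) + s*(S.filter (fun x => ¬ x ≤ lo + 2^s)).card) :=
            Nat.add_le_add hTl_cnt hTr_cnt
          _ = (b+1) + ((b+1) + s*((S.filter (fun x => x ≤ lo + 2^s)).card
              + (S.filter (fun x => ¬ x ≤ lo + 2^s)).card)) := by ring
          _ = (b+1) + ((b+1) + s*S.card) := by rw [hcards]
          _ ≤ (b+1) + (S.card + s*S.card) := by omega
          _ = (b+1) + (s+1)*S.card := by ring

theorem stmt_5 (u : ℕ) (hu2 : 2 ≤ u) (hu : ∃ j : ℕ, u = 2 ^ j) (b : ℕ) (hb : 1 ≤ b)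
    (X : Finset ℕ) (hX : ∀ x ∈ X, x ∈ Finset.Ioc 0 u) :
    ∃ 𝒮 : Finset (Finset ℕ),
      (∀ A ∈ 𝒮, A ⊆ X ∧ A.card ≤ b) ∧
      (𝒮.card : ℝ) ≤ 2 * ((b : ℝ) + 1) ^ 2 * (u : ℝ) * (Real.logb 2 (u : ℝ) + 1) ∧
      ∀ S ⊆ X, ∃ Shat ⊆ X, Shat.card = S.card ∧ SUM Shat = SUM S ∧
        ∃ 𝒯 ⊆ 𝒮, (𝒯 : Set (Finset ℕ)).PairwiseDisjoint id ∧
          (𝒯.card : ℝ) ≤ 2 * ((S.card : ℝ) / (b : ℝ) + 1) * (Real.logb 2 (u : ℝ) + 1) ∧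
          Shat = 𝒯.biUnion id := by
  obtain ⟨L, rfl⟩ := hu
  have hb0 : (0:ℝ) < (b:ℝ) := by exact_mod_cast hb
  have hb1 : (1:ℝ) ≤ (b:ℝ) := by exact_mod_cast hb
  have hL0 : (0:ℝ) ≤ (L:ℝ) := Nat.cast_nonneg L
  have hcast : (((2:ℕ)^L : ℕ) : ℝ) = (2:ℝ)^L := by push_cast; ring
  have hlog : Real.logb 2 (((2:ℕ)^L : ℕ) : ℝ) = (L : ℝ) := by
    rw [hcast, Real.logb_pow, Real.logb_self_eq_one (by norm_num : (1:ℝ) < 2), mul_one]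
  rw [hlog]
  refine ⟨FAM X b L, fun A hA => FAM_mem hA, ?_, ?_⟩
  · have hc := FAM_card X b L
    have hc' : ((FAM X b L).card : ℝ) ≤ ((L:ℝ)+1) * ((b:ℝ)*(b:ℝ)*(2:ℝ)^L) := by
      have : (((L+1) * (b*b*2^L) : ℕ) : ℝ) = ((L:ℝ)+1) * ((b:ℝ)*(b:ℝ)*(2:ℝ)^L) := by
        push_cast; ring
      rw [← this]
      exact_mod_cast hc
    have h1 : (b:ℝ)*(b:ℝ) ≤ 2*((b:ℝ)+1)^2 := by nlinarith
    calc ((FAM X b L).card : ℝ) ≤ ((L:ℝ)+1) * ((b:ℝ)*(b:ℝ)*(2:ℝ)^L) := hc'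
      _ = ((b:ℝ)*(b:ℝ)) * (((L:ℝ)+1)*(2:ℝ)^L) := by ring
      _ ≤ (2*((b:ℝ)+1)^2) * (((L:ℝ)+1)*(2:ℝ)^L) := by
          apply mul_le_mul_of_nonneg_right h1
          positivity
      _ = 2*((b:ℝ)+1)^2 * (((2:ℕ)^L : ℕ) : ℝ) * ((L:ℝ)+1) := by rw [hcast]; ring
  · intro S hS
    have hmem : ∀ x ∈ S, 0 < x ∧ x ≤ 0 + 2^L := by
      intro x hx
      have := Finset.mem_Ioc.mp (hX x (hS hx))
      omega
    obtain ⟨𝒯, hdat, hprops, hpd, hcard, hsum, hcnt⟩ :=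
      main X b hb L 0 S hS hmem ⟨0, by simp⟩
    refine ⟨𝒯.biUnion id, ?_, hcard, hsum, 𝒯, ?_, hpd, ?_, rfl⟩
    · intro x hx
      obtain ⟨A, hA, hxA⟩ := Finset.mem_biUnion.mp hx
      exact (hprops A hA).1 hxA
    · intro A hA
      obtain ⟨t', lo', m, σ, ht', ⟨j, hj⟩, _, hlo2, hm1, hmb, hσ1, hσ2, hAeq⟩ := hdat A hA
      rw [hAeq]
      exact mem_FAM_of ht' hj (by omega) hm1 hmb hσ1 hσ2
    · have hcnt' : (𝒯.card : ℝ) * ((b:ℝ)+1) ≤ ((b:ℝ)+1) + (L:ℝ)*(S.card:ℝ) := by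
        have : ((𝒯.card * (b+1) : ℕ) : ℝ) ≤ (((b+1) + L * S.card : ℕ) : ℝ) := by
          exact_mod_cast hcnt
        push_cast at this
        linarith
      have hc0 : (0:ℝ) ≤ (𝒯.card:ℝ) := Nat.cast_nonneg _
      have hm0 : (0:ℝ) ≤ (S.card:ℝ) := Nat.cast_nonneg _
      have key : (𝒯.card:ℝ) * (b:ℝ) ≤ 2*((S.card:ℝ)+(b:ℝ))*((L:ℝ)+1) := by
        nlinarith [mul_nonneg hL0 hm0]
      have heq : 2*((S.card:ℝ)/(b:ℝ)+1)*((L:ℝ)+1)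
          = 2*((S.card:ℝ)+(b:ℝ))*((L:ℝ)+1) / (b:ℝ) := by
        field_simp
      rw [heq, le_div_iff₀ hb0]
      exact key
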